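/- Let K ≥ 1 be an integer, let σ_X² > 0, let σ_{N_1}², …, σ_{N_K}² > 0, let r_1, …, r_K ≥ 0, and let D > 0 satisfy ∑_{k=1}^K (1 − exp(−2r_k))/σ_{N_k}² = 1/D. Let α_1 ≥ α_2 ≥ … ≥ α_K ≥ 0. Set z_k = (1 − exp(−2r_k))/σ_{N_k}², S_k = ∑_{i=k}^K z_i (with S_{K+1} = 0), and define R*_k = r_k + (1/2)·log(1/σ_X² + S_k) − (1/2)·log(1/σ_X² + S_{k+1}) for k = 1, …, K. Let 𝓡 be the set of all (R_1, …, R_K) ∈ ℝ^K such that for every subset A ⊆ {1, …, K}: ∑_{k∈A} R_k ≥ ∑_{k∈A} r_k + (1/2)·log(1/σ_X² + 1/D) − (1/2)·log(1/σ_X² + ∑_{k∈A^c} z_k), where A^c = {1,…,K} \ A. Then (R*_1, …, R*_K) ∈ 𝓡, and for every (R'_1, …, R'_K) ∈ 𝓡 one has ∑_{k=1}^K α_k·R*_k ≤ ∑_{k=1}^K α_k·R'_k. -/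

import Mathlib

open Finset

private lemma log_sub_log_le {x y w : ℝ} (hw : 0 ≤ w) (hx : 0 < x - w) (hxy : x ≤ y) :
    Real.log y - Real.log (y - w) ≤ Real.log x - Real.log (x - w) := by
  have hx0 : 0 < x := by linarith
  have hy0 : 0 < y := by linarith
  have hyw : 0 < y - w := by linarith
  have hmul : y * (x - w) ≤ x * (y - w) := by nlinarith
  have h1 : Real.log (y * (x - w)) ≤ Real.log (x * (y - w)) :=
    Real.log_le_log (by positivity) hmul
  rw [Real.log_mul (ne_of_gt hy0) (ne_of_gt hx),
    Real.log_mul (ne_of_gt hx0) (ne_of_gt hyw)] at h1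
  linarith

private lemma abel_sum (a d : ℕ → ℝ) (n : ℕ) :
    ∑ i ∈ Finset.range n, a i * d i
      = (∑ i ∈ Finset.range n, (a i - a (i + 1)) * ∑ j ∈ Finset.range (i + 1), d j)
        + a n * ∑ j ∈ Finset.range n, d j := by
  induction n with
  | zero => simp
  | succ n ih =>
      rw [Finset.sum_range_succ (f := fun i => a i * d i), ih,
        Finset.sum_range_succ
          (f := fun i => (a i - a (i + 1)) * ∑ j ∈ Finset.range (i + 1), d j),
        Finset.sum_range_succ (f := d)]
      ring

private noncomputable def Sf (K : ℕ) (z : Fin K → ℝ) (k : Fin K) : ℝ :=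
  ∑ i ∈ Finset.univ.filter (fun i => k ≤ i), z i

private noncomputable def Tf (K : ℕ) (z : Fin K → ℝ) (k : Fin K) : ℝ :=
  ∑ i ∈ Finset.univ.filter (fun i => k < i), z i

private lemma Sf_nonneg {K : ℕ} {z : Fin K → ℝ} (hz0 : ∀ k, 0 ≤ z k) (k : Fin K) :
    0 ≤ Sf K z k :=
  Finset.sum_nonneg fun i _ => hz0 i

private lemma Tf_nonneg {K : ℕ} {z : Fin K → ℝ} (hz0 : ∀ k, 0 ≤ z k) (k : Fin K) :
    0 ≤ Tf K z k :=
  Finset.sum_nonneg fun i _ => hz0 i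

private lemma Sf_eq_add_Tf (K : ℕ) (z : Fin K → ℝ) (k : Fin K) :
    Sf K z k = z k + Tf K z k := by
  unfold Sf Tf
  have h : Finset.univ.filter (fun i => k ≤ i)
      = insert k (Finset.univ.filter (fun i => k < i)) := by
    ext i
    simp only [Finset.mem_insert, Finset.mem_filter, Finset.mem_univ, true_and,
      Fin.le_def, Fin.lt_def, Fin.ext_iff]
    omega
  rw [h, Finset.sum_insert (by simp)]

/-- Key inequality (part 1 core): for every subset `A`,
`log(c+W) - log(c+W-∑_A z) ≤ ∑_{k∈A} [log(c+S_k) - log(c+T_k)]`. -/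
private lemma key_ineq {K : ℕ} (c : ℝ) (hc : 0 < c) (z : Fin K → ℝ)
    (hz0 : ∀ k, 0 ≤ z k) (A : Finset (Fin K)) :
    Real.log (c + ∑ k, z k) - Real.log (c + (∑ k, z k - ∑ k ∈ A, z k))
      ≤ ∑ k ∈ A, (Real.log (c + Sf K z k) - Real.log (c + Tf K z k)) := by
  induction A using Finset.induction_on_max with
  | empty => simp
  | insert a s hmax ih =>
      have has : a ∉ s := fun h => lt_irrefl a (hmax a h)
      rw [Finset.sum_insert has, Finset.sum_insert has]
      -- S a ≤ W - ∑_s z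
      have hsub : Finset.univ.filter (fun i => a ≤ i) ⊆ sᶜ := by
        intro i hi
        simp only [Finset.mem_filter, Finset.mem_univ, true_and] at hi
        simp only [Finset.mem_compl]
        intro his
        exact absurd hi (not_le_of_gt (hmax i his))
      have h1 : Sf K z a ≤ ∑ k, z k - ∑ k ∈ s, z k := by
        have h2 : Sf K z a ≤ ∑ i ∈ sᶜ, z i :=
          Finset.sum_le_sum_of_subset_of_nonneg hsub fun i _ _ => hz0 i
        have h3 : ∑ i ∈ s, z i + ∑ i ∈ sᶜ, z i = ∑ i, z i :=
          Finset.sum_add_sum_compl s z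
        linarith
      have hTa : 0 < c + Sf K z a - z a := by
        have := Tf_nonneg hz0 a
        have h4 := Sf_eq_add_Tf K z a
        linarith
      have hterm := log_sub_log_le (x := c + Sf K z a)
        (y := c + (∑ k, z k - ∑ k ∈ s, z k)) (w := z a) (hz0 a) hTa (by linarith)
      have e1 : c + (∑ k, z k - ∑ k ∈ s, z k) - z a
          = c + (∑ k, z k - (z a + ∑ k ∈ s, z k)) := by ring
      have e2 : c + Sf K z a - z a = c + Tf K z a := by
        have := Sf_eq_add_Tf K z a; linarith
      rw [e1, e2] at hterm
      linarith

/-- Telescoping identity for the left-segment partial sums. -/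
private lemma tele_eq {K : ℕ} (c : ℝ) (z : Fin K → ℝ) (m : ℕ) :
    ∑ i ∈ Finset.univ.filter (fun i : Fin K => i.val < m),
        (Real.log (c + Sf K z i) - Real.log (c + Tf K z i))
      = Real.log (c + ∑ k, z k)
        - Real.log (c + ∑ i ∈ Finset.univ.filter (fun i : Fin K => m ≤ i.val), z i) := by
  induction m with
  | zero =>
      have h1 : Finset.univ.filter (fun i : Fin K => i.val < 0) = (∅ : Finset (Fin K)) := by
        simp
      have h2 : Finset.univ.filter (fun i : Fin K => 0 ≤ i.val) = Finset.univ := by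
        simp
      rw [h1, h2]
      simp
  | succ m ih =>
      by_cases h : m < K
      · have hB : Finset.univ.filter (fun i : Fin K => i.val < m + 1)
            = insert ⟨m, h⟩ (Finset.univ.filter (fun i : Fin K => i.val < m)) := by
          ext i
          simp only [Finset.mem_insert, Finset.mem_filter, Finset.mem_univ, true_and,
            Fin.ext_iff]
          omega
        have hnm : (⟨m, h⟩ : Fin K) ∉ Finset.univ.filter (fun i : Fin K => i.val < m) := by
          simp
        have hSx : Finset.univ.filter (fun i : Fin K => m ≤ i.val)
            = insert ⟨m, h⟩ (Finset.univ.filter (fun i : Fin K => m + 1 ≤ i.val)) := by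
          ext i
          simp only [Finset.mem_insert, Finset.mem_filter, Finset.mem_univ, true_and,
            Fin.ext_iff]
          omega
        have hnm2 : (⟨m, h⟩ : Fin K)
            ∉ Finset.univ.filter (fun i : Fin K => m + 1 ≤ i.val) := by
          simp
        have eS : Sf K z ⟨m, h⟩
            = ∑ i ∈ Finset.univ.filter (fun i : Fin K => m ≤ i.val), z i := by
          unfold Sf
          apply Finset.sum_congr _ fun _ _ => rfl
          ext i
          simp [Fin.le_def]
        have eT : Tf K z ⟨m, h⟩
            = ∑ i ∈ Finset.univ.filter (fun i : Fin K => m + 1 ≤ i.val), z i := by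
          unfold Tf
          apply Finset.sum_congr _ fun _ _ => rfl
          ext i
          simp only [Finset.mem_filter, Finset.mem_univ, true_and, Fin.lt_def]
          omega
        rw [hB, Finset.sum_insert hnm, ih, eS, eT]
        ring
      · have hBeq : Finset.univ.filter (fun i : Fin K => i.val < m + 1)
            = Finset.univ.filter (fun i : Fin K => i.val < m) := by
          ext i
          have hi := i.isLt
          simp only [Finset.mem_filter, Finset.mem_univ, true_and]
          omega
        have hSeq : Finset.univ.filter (fun i : Fin K => m + 1 ≤ i.val)
            = Finset.univ.filter (fun i : Fin K => m ≤ i.val) := by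
          ext i
          have hi := i.isLt
          simp only [Finset.mem_filter, Finset.mem_univ, true_and]
          omega
        rw [hBeq, hSeq, ih]

/-- Explicit minimizer of the weighted sum rate over the single-layer rate region of the
unbiased CEO problem (Lemma 2 of the paper, single layer): the point `R*` with
`R*_k = r_k + (1/2)·log(1/σ_X² + S_k) − (1/2)·log(1/σ_X² + S_{k+1})` lies in the rate region
`𝓡` and minimizes `∑ α_k R_k` over `𝓡` for nonincreasing nonnegative weights `α`. -/
theorem optimal_weighted_sum_rate
    (K : ℕ) (hK : 1 ≤ K)
    (σX2 : ℝ) (hσX2 : 0 < σX2)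
    (σN2 : Fin K → ℝ) (hσN2 : ∀ k, 0 < σN2 k)
    (r : Fin K → ℝ) (hr : ∀ k, 0 ≤ r k)
    (D : ℝ) (hD : 0 < D)
    (z : Fin K → ℝ) (hz : ∀ k, z k = (1 - Real.exp (-2 * r k)) / σN2 k)
    (hsum : ∑ k, z k = 1 / D)
    (α : Fin K → ℝ) (hα_mono : ∀ i j : Fin K, i ≤ j → α j ≤ α i)
    (hα_nonneg : ∀ k, 0 ≤ α k)
    (Rstar : Fin K → ℝ)
    (hRstar : ∀ k, Rstar k = r k
      + (1 / 2) * Real.log (1 / σX2 + ∑ i ∈ Finset.univ.filter (fun i => k ≤ i), z i)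
      - (1 / 2) * Real.log (1 / σX2 + ∑ i ∈ Finset.univ.filter (fun i => k < i), z i))
    (𝓡 : Set (Fin K → ℝ))
    (h𝓡 : 𝓡 = { R : Fin K → ℝ | ∀ A : Finset (Fin K),
      ∑ k ∈ A, R k ≥ (∑ k ∈ A, r k)
        + (1 / 2) * Real.log (1 / σX2 + 1 / D)
        - (1 / 2) * Real.log (1 / σX2 + ∑ k ∈ Aᶜ, z k) }) :
    Rstar ∈ 𝓡 ∧ ∀ R' ∈ 𝓡, ∑ k, α k * Rstar k ≤ ∑ k, α k * R' k := by
  subst h𝓡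
  have hc0 : 0 < 1 / σX2 := by positivity
  have hz0 : ∀ k, 0 ≤ z k := by
    intro k
    rw [hz k]
    have hle : Real.exp (-2 * r k) ≤ 1 := Real.exp_le_one_iff.mpr (by nlinarith [hr k])
    exact div_nonneg (by linarith) (hσN2 k).le
  have hRL : ∀ k, Rstar k
      = r k + (1 / 2) * (Real.log (1 / σX2 + Sf K z k) - Real.log (1 / σX2 + Tf K z k)) := by
    intro k
    rw [hRstar k]
    unfold Sf Tf
    ring
  -- Partial-sum expression for Rstar over an arbitrary set
  have hRsumA : ∀ A : Finset (Fin K), ∑ k ∈ A, Rstar k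
      = (∑ k ∈ A, r k) + (1 / 2)
        * ∑ k ∈ A, (Real.log (1 / σX2 + Sf K z k) - Real.log (1 / σX2 + Tf K z k)) := by
    intro A
    rw [Finset.sum_congr rfl fun k _ => hRL k, Finset.sum_add_distrib, Finset.mul_sum]
  have hcompl : ∀ A : Finset (Fin K), ∑ k ∈ Aᶜ, z k = ∑ k, z k - ∑ k ∈ A, z k := by
    intro A
    have := Finset.sum_add_sum_compl A z
    linarith
  -- Part 1: membership
  have hmem : ∀ A : Finset (Fin K),
      ∑ k ∈ A, Rstar k ≥ (∑ k ∈ A, r k)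
        + (1 / 2) * Real.log (1 / σX2 + 1 / D)
        - (1 / 2) * Real.log (1 / σX2 + ∑ k ∈ Aᶜ, z k) := by
    intro A
    have hkey := key_ineq (1 / σX2) hc0 z hz0 A
    rw [hRsumA A, hcompl A, ← hsum]
    linarith
  refine ⟨hmem, ?_⟩
  intro R' hR'
  simp only [Set.mem_setOf_eq] at hR'
  -- Partial-sum nonnegativity of R' - Rstar on initial segments
  have hpart : ∀ m : ℕ,
      0 ≤ ∑ i ∈ Finset.univ.filter (fun i : Fin K => i.val < m), (R' i - Rstar i) := by
    intro m
    have h1 := hR' (Finset.univ.filter (fun i : Fin K => i.val < m))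
    have hcpl : (Finset.univ.filter (fun i : Fin K => i.val < m))ᶜ
        = Finset.univ.filter (fun i : Fin K => m ≤ i.val) := by
      ext i
      simp [Nat.not_lt]
    rw [hcpl] at h1
    have h2 := hRsumA (Finset.univ.filter (fun i : Fin K => i.val < m))
    rw [tele_eq (1 / σX2) z m, hsum] at h2
    rw [Finset.sum_sub_distrib, h2]
    linarith
  -- Abel summation
  set a : ℕ → ℝ := fun n => if h : n < K then α ⟨n, h⟩ else 0 with ha
  set d : ℕ → ℝ := fun n => if h : n < K then R' ⟨n, h⟩ - Rstar ⟨n, h⟩ else 0 with hd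
  have hsum_eq : ∑ k : Fin K, α k * (R' k - Rstar k) = ∑ n ∈ Finset.range K, a n * d n := by
    rw [← Fin.sum_univ_eq_sum_range (fun n => a n * d n) K]
    apply Finset.sum_congr rfl
    intro i _
    simp [ha, hd, i.isLt]
  have hDrange : ∀ m : ℕ, m ≤ K → ∑ j ∈ Finset.range m, d j
      = ∑ i ∈ Finset.univ.filter (fun i : Fin K => i.val < m), (R' i - Rstar i) := by
    intro m
    induction m with
    | zero => intro _; simp
    | succ m ih =>
        intro hm
        have hmK : m < K := hm
        have hB : Finset.univ.filter (fun i : Fin K => i.val < m + 1)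
            = insert ⟨m, hmK⟩ (Finset.univ.filter (fun i : Fin K => i.val < m)) := by
          ext i
          simp only [Finset.mem_insert, Finset.mem_filter, Finset.mem_univ, true_and,
            Fin.ext_iff]
          omega
        have hnm : (⟨m, hmK⟩ : Fin K)
            ∉ Finset.univ.filter (fun i : Fin K => i.val < m) := by simp
        rw [Finset.sum_range_succ, ih (Nat.le_of_succ_le hm), hB, Finset.sum_insert hnm]
        have hdm : d m = R' ⟨m, hmK⟩ - Rstar ⟨m, hmK⟩ := by simp [hd, hmK]
        rw [hdm]
        ring
  have habel := abel_sum a d K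
  have haK : a K = 0 := by simp [ha]
  have hterm : ∀ i ∈ Finset.range K,
      0 ≤ (a i - a (i + 1)) * ∑ j ∈ Finset.range (i + 1), d j := by
    intro i hi
    have hiK : i < K := Finset.mem_range.mp hi
    have h1 : 0 ≤ a i - a (i + 1) := by
      by_cases h : i + 1 < K
      · have hmono := hα_mono ⟨i, hiK⟩ ⟨i + 1, h⟩ (by simp [Fin.le_def])
        simp only [ha, dif_pos hiK, dif_pos h]
        linarith
      · simp only [ha, dif_pos hiK, dif_neg h]
        simpa using hα_nonneg ⟨i, hiK⟩
    have h2 : 0 ≤ ∑ j ∈ Finset.range (i + 1), d j := by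
      rw [hDrange (i + 1) hiK]
      exact hpart (i + 1)
    exact mul_nonneg h1 h2
  have hfinal : 0 ≤ ∑ n ∈ Finset.range K, a n * d n := by
    rw [habel, haK]
    have := Finset.sum_nonneg hterm
    simpa using this
  have hnn : 0 ≤ ∑ k : Fin K, α k * (R' k - Rstar k) := by
    rw [hsum_eq]; exact hfinal
  have expand : ∑ k : Fin K, α k * (R' k - Rstar k)
      = ∑ k, α k * R' k - ∑ k, α k * Rstar k := by
    rw [← Finset.sum_sub_distrib]
    apply Finset.sum_congr rfl
    intros
    ring
  linarith [expand ▸ hnn]
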